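/- Chaining of approximate channels: for CPTP maps M_i, N_i : A_i → A_{i+1} (i = 1,…,k) and a state Ω on A_1, ‖M_k∘⋯∘M_1 - N_k∘⋯∘N_1‖_Ω ≤ Σ_{i=1}^k ‖M_i - N_i‖_{(M_{i-1}∘⋯∘M_1)(Ω)}. -/

import Mathlib

open scoped Matrix Kronecker ComplexOrder

noncomputable section

noncomputable def traceNorm {n : Type*} [Fintype n] [DecidableEq n] (A : Matrix n n ℂ) : ℝ :=
  (((Matrix.posSemidef_conjTranspose_mul_self A).1.eigenvectorUnitary.1 *
      Matrix.diagonal (((↑) : ℝ → ℂ) ∘ (√·) ∘ (Matrix.posSemidef_conjTranspose_mul_self A).1.eigenvalues) *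
      (star (Matrix.posSemidef_conjTranspose_mul_self A).1.eigenvectorUnitary : Matrix n n ℂ)).trace).re

noncomputable def vnEntropy {n : Type*} [Fintype n] [DecidableEq n] (ρ : Matrix n n ℂ) : ℝ :=
  if h : ρ.IsHermitian then -∑ i, (h.eigenvalues i * Real.log (h.eigenvalues i)) else 0

def ptraceL {a b : Type*} [Fintype a] (M : Matrix (a × b) (a × b) ℂ) : Matrix b b ℂ :=
  Matrix.of fun i j => ∑ k : a, M (k, i) (k, j)

def ptraceR {a b : Type*} [Fintype b] (M : Matrix (a × b) (a × b) ℂ) : Matrix a a ℂ :=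
  Matrix.of fun i j => ∑ k : b, M (i, k) (j, k)

def ptrace3M {a b c : Type*} [Fintype b] (M : Matrix (a × b × c) (a × b × c) ℂ) :
    Matrix (a × c) (a × c) ℂ :=
  Matrix.of fun i j => ∑ k : b, M (i.1, k, i.2) (j.1, k, j.2)

open scoped Classical in
noncomputable def msqrt {n : Type*} [Fintype n] [DecidableEq n] (A : Matrix n n ℂ) :
    Matrix n n ℂ :=
  if h : A.PosSemidef then
    h.1.eigenvectorUnitary.1 * Matrix.diagonal ((↑) ∘ (√·) ∘ h.1.eigenvalues) *
      (star h.1.eigenvectorUnitary : Matrix n n ℂ)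
  else 0

noncomputable def fidelity {n : Type*} [Fintype n] [DecidableEq n] (ρ σ : Matrix n n ℂ) : ℝ :=
  (((msqrt (msqrt σ * ρ * msqrt σ)).trace).re) ^ 2

def outer {n : Type*} (v : n → ℂ) : Matrix n n ℂ :=
  Matrix.of fun i j => v i * (starRingEnd ℂ) (v j)

def krausApply {ι a b : Type*} [Fintype ι] [Fintype a]
    (K : ι → Matrix b a ℂ) (ρ : Matrix a a ℂ) : Matrix b b ℂ :=
  ∑ i, K i * ρ * (K i)ᴴ

noncomputable def cdist {i k a b : Type*} [Fintype i] [Fintype k] [Fintype a] [DecidableEq a]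
    [Fintype b] [DecidableEq b]
    (K : i -> Matrix b a Complex) (L : k -> Matrix b a Complex) (w : Matrix a a Complex) : Real :=
  sSup {r | exists (m : Nat) (x : Matrix (Fin m × a) (Fin m × a) Complex),
    x.PosSemidef ∧ x.trace = 1 ∧ ptraceL x = w ∧
    r = traceNorm (krausApply (fun j => (1 : Matrix (Fin m) (Fin m) Complex) ⊗ₖ K j) x
          - krausApply (fun j => (1 : Matrix (Fin m) (Fin m) Complex) ⊗ₖ L j) x)}

def iterApp (d c : ℕ → ℕ)
    (K : ∀ i, Fin (c i) → Matrix (Fin (d (i+1))) (Fin (d i)) ℂ) :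
    ∀ k, Matrix (Fin (d 0)) (Fin (d 0)) ℂ → Matrix (Fin (d k)) (Fin (d k)) ℂ
  | 0 => fun ρ => ρ
  | (k+1) => fun ρ => krausApply (K k) (iterApp d c K k ρ)

def iterExt (m : ℕ) (d c : ℕ → ℕ)
    (K : ∀ i, Fin (c i) → Matrix (Fin (d (i+1))) (Fin (d i)) ℂ) :
    ∀ k, Matrix (Fin m × Fin (d 0)) (Fin m × Fin (d 0)) ℂ →
      Matrix (Fin m × Fin (d k)) (Fin m × Fin (d k)) ℂ
  | 0 => fun ξ => ξ
  | (k+1) => fun ξ =>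
      krausApply (fun j => (1 : Matrix (Fin m) (Fin m) ℂ) ⊗ₖ K k j) (iterExt m d c K k ξ)

namespace AuxCh
open Matrix

variable {n : Type*} [Fintype n] [DecidableEq n]

noncomputable def cj (U : Matrix n n ℂ) (f : n → ℝ) : Matrix n n ℂ :=
  U * Matrix.diagonal (fun i => (f i : ℂ)) * Uᴴ



open Matrix
open scoped MatrixOrder


lemma psd_diag_re_nonneg {A : Matrix n n ℂ} (hA : A.PosSemidef) (i : n) : 0 ≤ (A i i).re := by
  have h := hA.dotProduct_mulVec_nonneg (Pi.single i 1)
  have he : (star (Pi.single i 1) : n → ℂ) ⬝ᵥ (A *ᵥ Pi.single i 1) = A i i := by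
    simp [dotProduct, Matrix.mulVec, Pi.single_apply, Finset.sum_ite_eq,
      dotProduct_single]
  rw [he] at h
  exact (Complex.le_def.mp h).1

lemma psd_trace_re_nonneg {A : Matrix n n ℂ} (hA : A.PosSemidef) : 0 ≤ A.trace.re := by
  rw [Matrix.trace]
  simp only [Complex.re_sum]
  exact Finset.sum_nonneg fun i _ => psd_diag_re_nonneg hA i

lemma traceNorm_eq (A : Matrix n n ℂ) : traceNorm A = (CFC.sqrt (Aᴴ * A)).trace.re := by
  have h0 : 0 ≤ Aᴴ * A := (Matrix.posSemidef_conjTranspose_mul_self A).nonneg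
  rw [CFC.sqrt_eq_real_sqrt _ h0, cfcₙ_eq_cfc (hf0 := Real.sqrt_zero),
    (Matrix.posSemidef_conjTranspose_mul_self A).1.cfc_eq]
  rfl

lemma traceNorm_nonneg (A : Matrix n n ℂ) : 0 ≤ traceNorm A := by
  rw [traceNorm_eq]
  exact psd_trace_re_nonneg (Matrix.nonneg_iff_posSemidef.mp (CFC.sqrt_nonneg _))

lemma trace_mul_psd_re_nonneg {A B : Matrix n n ℂ} (hA : A.PosSemidef) (hB : B.PosSemidef) :
    0 ≤ ((A * B).trace).re := by
  have h1 : A * B = CFC.sqrt A * (CFC.sqrt A * B) := by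
    rw [← mul_assoc, CFC.sqrt_mul_sqrt_self A hA.nonneg]
  rw [h1, Matrix.trace_mul_comm]
  have h2 : CFC.sqrt A * B * CFC.sqrt A = CFC.sqrt A * B * (CFC.sqrt A)ᴴ := by
    rw [(Matrix.nonneg_iff_posSemidef.mp (CFC.sqrt_nonneg A)).1]
  have h3 := hB.mul_mul_conjTranspose_same (CFC.sqrt A)
  rw [mul_assoc] at h2
  rw [mul_assoc]
  exact psd_trace_re_nonneg (h2 ▸ h3)

variable {U : Matrix n n ℂ}

lemma cj_mul (hU : Uᴴ * U = 1) (f g : n → ℝ) :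
    cj U f * cj U g = cj U (fun i => f i * g i) := by
  simp only [cj, mul_assoc]
  rw [← mul_assoc Uᴴ U, hU, one_mul, ← mul_assoc (Matrix.diagonal _), diagonal_mul_diagonal]
  push_cast
  rfl

lemma cj_trace (f : n → ℝ) (hU : Uᴴ * U = 1) : (cj U f).trace = ∑ i, (f i : ℂ) := by
  rw [cj, Matrix.trace_mul_cycle, hU, one_mul, Matrix.trace_diagonal]

variable {X : Matrix n n ℂ}

lemma unitary_hU (hX : X.IsHermitian) :
    ((hX.eigenvectorUnitary : Matrix n n ℂ))ᴴ * (hX.eigenvectorUnitary : Matrix n n ℂ) = 1 := by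
  rw [← Matrix.star_eq_conjTranspose]
  exact Matrix.mem_unitaryGroup_iff'.mp hX.eigenvectorUnitary.2

lemma herm_cj (hX : X.IsHermitian) :
    X = cj (hX.eigenvectorUnitary : Matrix n n ℂ) hX.eigenvalues := by
  conv_lhs => rw [hX.spectral_theorem]
  rfl

lemma cj_psd (f : n → ℝ) (hf : ∀ i, 0 ≤ f i) : (cj U f).PosSemidef := by
  have hd : (Matrix.diagonal (fun i => (f i : ℂ))).PosSemidef := by
    rw [posSemidef_diagonal_iff]
    intro i
    rw [Complex.zero_le_real]
    exact hf i
  exact hd.mul_mul_conjTranspose_same U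

lemma traceNorm_herm (hX : X.IsHermitian) :
    traceNorm X = ∑ i, |hX.eigenvalues i| := by
  set U := (hX.eigenvectorUnitary : Matrix n n ℂ) with hUdef
  have hU : Uᴴ * U = 1 := unitary_hU hX
  have hR : (cj U (fun i => |hX.eigenvalues i|)).PosSemidef :=
    cj_psd _ (fun i => abs_nonneg _)
  have hsq : (cj U (fun i => |hX.eigenvalues i|)) ^ 2 = Xᴴ * X := by
    rw [pow_two, cj_mul hU, hX.eq]
    conv_rhs => rw [herm_cj hX, cj_mul hU]
    have : (fun i => |hX.eigenvalues i| * |hX.eigenvalues i|)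
        = fun i => hX.eigenvalues i * hX.eigenvalues i :=
      funext fun i => abs_mul_abs_self _
    rw [this]
  have heq := (CFC.sqrt_unique (a := Xᴴ * X) (b := cj U (fun i => |hX.eigenvalues i|))
    (by rw [← pow_two]; exact hsq) hR.nonneg).symm
  rw [traceNorm_eq, ← heq, cj_trace _ hU]
  push_cast
  simp




variable {n : Type*} [Fintype n] [DecidableEq n] {U X : Matrix n n ℂ}

lemma cj_sub (f g : n → ℝ) : cj U f - cj U g = cj U (fun i => f i - g i) := by
  simp only [cj, ← sub_mul, ← mul_sub, diagonal_sub]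
  push_cast
  rfl

lemma cj_add (f g : n → ℝ) : cj U f + cj U g = cj U (fun i => f i + g i) := by
  simp only [cj, ← add_mul, ← mul_add, diagonal_add]
  push_cast
  rfl

lemma cj_one (hU' : U * Uᴴ = 1) : cj U (fun _ => (1:ℝ)) = 1 := by
  simp [cj, diagonal_one, hU']

lemma unitary_hU' (hX : X.IsHermitian) :
    (hX.eigenvectorUnitary : Matrix n n ℂ) * ((hX.eigenvectorUnitary : Matrix n n ℂ))ᴴ = 1 := by
  rw [← Matrix.star_eq_conjTranspose]
  exact Matrix.mem_unitaryGroup_iff.mp hX.eigenvectorUnitary.2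

lemma herm_decomp (hX : X.IsHermitian) :
    ∃ P Q : Matrix n n ℂ, P.PosSemidef ∧ Q.PosSemidef ∧ X = P - Q ∧
      P.trace.re + Q.trace.re = traceNorm X := by
  set ev := hX.eigenvalues with hev
  set U := (hX.eigenvectorUnitary : Matrix n n ℂ) with hUd
  have hU : Uᴴ * U = 1 := unitary_hU hX
  refine ⟨cj U (fun i => max (ev i) 0), cj U (fun i => max (-ev i) 0),
    cj_psd _ (fun i => le_max_right _ _), cj_psd _ (fun i => le_max_right _ _), ?_, ?_⟩
  · rw [cj_sub,
      show (fun i => max (ev i) 0 - max (-ev i) 0) = ev from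
        funext fun i => max_zero_sub_max_neg_zero_eq_self (ev i)]
    exact herm_cj hX
  · rw [cj_trace _ hU, cj_trace _ hU, traceNorm_herm hX]
    simp only [Complex.re_sum, Complex.ofReal_re, ← Finset.sum_add_distrib]
    exact Finset.sum_congr rfl fun i _ => max_zero_add_max_neg_zero_eq_abs_self (ev i)

lemma traceNorm_sub_le {P Q : Matrix n n ℂ} (hP : P.PosSemidef) (hQ : Q.PosSemidef) :
    traceNorm (P - Q) ≤ P.trace.re + Q.trace.re := by
  have hX : (P - Q).IsHermitian := hP.1.sub hQ.1
  set ev := hX.eigenvalues with hev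
  set U := (hX.eigenvectorUnitary : Matrix n n ℂ) with hUd
  have hU : Uᴴ * U = 1 := unitary_hU hX
  have hU' : U * Uᴴ = 1 := unitary_hU' hX
  set s : _ → ℝ := fun i => if 0 ≤ ev i then 1 else -1 with hs
  set C := cj U s with hC
  have hCX : (C * (P - Q)).trace.re = traceNorm (P - Q) := by
    have : C * (P - Q) = cj U (fun i => s i * ev i) := by
      conv_lhs => rw [herm_cj hX]
      exact cj_mul hU _ _
    rw [this, cj_trace _ hU, traceNorm_herm hX]
    push_cast
    simp only [Complex.re_sum, Complex.ofReal_re]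
    apply Finset.sum_congr rfl
    intro i _
    by_cases h : 0 ≤ ev i
    · simp [hs, h, abs_of_nonneg h]
      rw [hev] at h ⊢
      exact (abs_of_nonneg h).symm
    · simp only [hs, if_neg h]
      rw [abs_of_neg (lt_of_not_ge h)]
      push_cast
      simp
  have hone : (1 : Matrix _ _ ℂ) - C = cj U (fun i => 1 - s i) := by
    rw [← cj_one hU', hC, cj_sub]
  have hone' : (1 : Matrix _ _ ℂ) + C = cj U (fun i => 1 + s i) := by
    rw [← cj_one hU', hC, cj_add]
  have h1 : 0 ≤ (((1 : Matrix _ _ ℂ) - C) * P).trace.re := by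
    apply trace_mul_psd_re_nonneg _ hP
    rw [hone]
    apply cj_psd
    intro i
    by_cases h : 0 ≤ ev i <;> norm_num [hs, h]
  have h2 : 0 ≤ (((1 : Matrix _ _ ℂ) + C) * Q).trace.re := by
    apply trace_mul_psd_re_nonneg _ hQ
    rw [hone']
    apply cj_psd
    intro i
    by_cases h : 0 ≤ ev i <;> norm_num [hs, h]
  rw [sub_mul, one_mul, Matrix.trace_sub, Complex.sub_re] at h1
  rw [add_mul, one_mul, Matrix.trace_add, Complex.add_re] at h2
  rw [← hCX, mul_sub, Matrix.trace_sub, Complex.sub_re]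
  linarith


end AuxCh

namespace AuxCh
open Matrix
open scoped MatrixOrder

variable {n : Type*} [Fintype n] [DecidableEq n]

lemma traceNorm_zero : traceNorm (0 : Matrix n n ℂ) = 0 := by
  have h0 : (0 : Matrix n n ℂ).PosSemidef := Matrix.PosSemidef.zero
  have hsq : (0 : Matrix n n ℂ) ^ 2 = (0 : Matrix n n ℂ)ᴴ * 0 := by simp [pow_two]
  have := (CFC.sqrt_unique (a := (0 : Matrix n n ℂ)ᴴ * 0) (b := 0)
    (by rw [← pow_two]; exact hsq) h0.nonneg).symm
  rw [traceNorm_eq, ← this]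
  simp

lemma traceNorm_add_le {X Y : Matrix n n ℂ} (hX : X.IsHermitian) (hY : Y.IsHermitian) :
    traceNorm (X + Y) ≤ traceNorm X + traceNorm Y := by
  obtain ⟨P₁, Q₁, hP₁, hQ₁, hX1, h₁⟩ := herm_decomp hX
  obtain ⟨P₂, Q₂, hP₂, hQ₂, hY1, h₂⟩ := herm_decomp hY
  have hXY : X + Y = (P₁ + P₂) - (Q₁ + Q₂) := by rw [hX1, hY1]; abel
  have h := traceNorm_sub_le (hP₁.add hP₂) (hQ₁.add hQ₂)
  rw [Matrix.trace_add, Matrix.trace_add, Complex.add_re, Complex.add_re] at h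
  rw [hXY]
  linarith

lemma krausApply_sub {ι a b : Type*} [Fintype ι] [Fintype a]
    (K : ι → Matrix b a ℂ) (A B : Matrix a a ℂ) :
    krausApply K (A - B) = krausApply K A - krausApply K B := by
  unfold krausApply
  rw [← Finset.sum_sub_distrib]
  refine Finset.sum_congr rfl fun j _ => ?_
  rw [Matrix.mul_sub, Matrix.sub_mul]

lemma krausApply_psd {ι a b : Type*} [Fintype ι] [Fintype a] [Fintype b]
    (K : ι → Matrix b a ℂ) {ρ : Matrix a a ℂ} (hρ : ρ.PosSemidef) :
    (krausApply K ρ).PosSemidef := by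
  unfold krausApply
  refine Finset.sum_induction _ _ (fun a b ha hb => ha.add hb) Matrix.PosSemidef.zero ?_
  intro j _
  exact hρ.mul_mul_conjTranspose_same (K j)

lemma krausApply_trace {ι a b : Type*} [Fintype ι] [Fintype a] [Fintype b] [DecidableEq a]
    {K : ι → Matrix b a ℂ} (hK : ∑ j, (K j)ᴴ * K j = 1) (ρ : Matrix a a ℂ) :
    (krausApply K ρ).trace = ρ.trace := by
  unfold krausApply
  rw [Matrix.trace_sum]
  have h1 : ∀ j, (K j * ρ * (K j)ᴴ).trace = ((K j)ᴴ * K j * ρ).trace := by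
    intro j
    rw [Matrix.trace_mul_cycle]
  simp_rw [h1]
  rw [← Matrix.trace_sum, ← Finset.sum_mul, hK, one_mul]

lemma kron_conjTranspose {a b c d : Type*} (A : Matrix a b ℂ) (B : Matrix c d ℂ) :
    (A ⊗ₖ B)ᴴ = Aᴴ ⊗ₖ Bᴴ := by
  ext ⟨i, j⟩ ⟨p, q⟩
  simp [Matrix.conjTranspose_apply, Matrix.kroneckerMap_apply]

lemma kron_one_sum {ι a c : Type*} [Fintype ι] [DecidableEq c]
    (A : ι → Matrix a a ℂ) :
    ∑ j, (1 : Matrix c c ℂ) ⊗ₖ A j = (1 : Matrix c c ℂ) ⊗ₖ (∑ j, A j) := by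
  ext ⟨i, p⟩ ⟨j, q⟩
  simp [Matrix.sum_apply, Matrix.kroneckerMap_apply, Finset.mul_sum]

lemma kron_kraus_cond {ι a b c : Type*} [Fintype ι] [Fintype a] [DecidableEq a] [Fintype b]
    [Fintype c] [DecidableEq c] {K : ι → Matrix b a ℂ} (hK : ∑ j, (K j)ᴴ * K j = 1) :
    ∑ j, ((1 : Matrix c c ℂ) ⊗ₖ K j)ᴴ * ((1 : Matrix c c ℂ) ⊗ₖ K j) = 1 := by
  have h : ∀ j, ((1 : Matrix c c ℂ) ⊗ₖ K j)ᴴ * ((1 : Matrix c c ℂ) ⊗ₖ K j)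
      = (1 : Matrix c c ℂ) ⊗ₖ ((K j)ᴴ * K j) := by
    intro j
    rw [kron_conjTranspose, ← Matrix.mul_kronecker_mul, Matrix.conjTranspose_one, one_mul]
  simp_rw [h]
  rw [kron_one_sum, hK, Matrix.one_kronecker_one]

lemma traceNorm_kraus_le {ι a b : Type*} [Fintype ι] [Fintype a] [DecidableEq a]
    [Fintype b] [DecidableEq b]
    {K : ι → Matrix b a ℂ} (hK : ∑ j, (K j)ᴴ * K j = 1) {X : Matrix a a ℂ}
    (hX : X.IsHermitian) : traceNorm (krausApply K X) ≤ traceNorm X := by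
  obtain ⟨P, Q, hP, hQ, hXeq, htr⟩ := herm_decomp hX
  rw [hXeq, krausApply_sub]
  have h := traceNorm_sub_le (krausApply_psd K hP) (krausApply_psd K hQ)
  rw [krausApply_trace hK, krausApply_trace hK] at h
  rw [hXeq] at htr
  exact h.trans_eq htr

lemma ptraceL_sum {a b ι : Type*} [Fintype a] [Fintype ι] (f : ι → Matrix (a × b) (a × b) ℂ) :
    ptraceL (∑ j, f j) = ∑ j, ptraceL (f j) := by
  ext i j
  simp only [ptraceL, Matrix.of_apply, Matrix.sum_apply]
  exact Finset.sum_comm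

lemma ptraceL_conj {a b c : Type*} [Fintype a] [Fintype b] [Fintype c] [DecidableEq c]
    (K : Matrix b a ℂ) (x : Matrix (c × a) (c × a) ℂ) :
    ptraceL (((1 : Matrix c c ℂ) ⊗ₖ K) * x * ((1 : Matrix c c ℂ) ⊗ₖ K)ᴴ)
      = K * ptraceL x * Kᴴ := by
  ext i j
  simp only [ptraceL, Matrix.of_apply, Matrix.mul_apply, Matrix.conjTranspose_apply,
    Matrix.kroneckerMap_apply, Matrix.one_apply, Fintype.sum_prod_type, ite_mul, one_mul,
    zero_mul, mul_ite, mul_zero, mul_one, star_mul', star_one, star_zero, apply_ite (starRingEnd ℂ),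
    Finset.sum_ite_eq, Finset.sum_ite_eq', Finset.mem_univ, if_true, Finset.sum_ite_irrel,
    Finset.sum_const_zero]
  simp only [apply_ite (star : ℂ → ℂ), star_zero, mul_ite, mul_zero, Finset.sum_ite_eq,
    Finset.mem_univ, if_true]
  simp only [Finset.sum_ite_irrel, Finset.sum_const_zero, Finset.sum_ite_eq,
    Finset.mem_univ, if_true]
  rw [show ∀ f : c → a → ℂ, ∑ p : c, ∑ q : a, f p q = ∑ q : a, ∑ p : c, f p q from
    fun f => Finset.sum_comm]
  refine Finset.sum_congr rfl fun s _ => ?_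
  rw [← Finset.sum_mul]
  congr 1
  rw [show ∀ f : c → a → ℂ, ∑ p : c, ∑ q : a, f p q = ∑ q : a, ∑ p : c, f p q from
    fun f => Finset.sum_comm]
  exact Finset.sum_congr rfl fun t _ => (Finset.mul_sum _ _ _).symm

lemma ptraceL_kraus {ι a b c : Type*} [Fintype ι] [Fintype a] [Fintype b] [Fintype c]
    [DecidableEq c]
    (K : ι → Matrix b a ℂ) (x : Matrix (c × a) (c × a) ℂ) :
    ptraceL (krausApply (fun j => (1 : Matrix c c ℂ) ⊗ₖ K j) x) = krausApply K (ptraceL x) := by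
  unfold krausApply
  rw [ptraceL_sum]
  exact Finset.sum_congr rfl fun j _ => ptraceL_conj (K j) x
end AuxCh

namespace AuxCh
open Matrix

lemma iterExt_psd (m : ℕ) (d c : ℕ → ℕ)
    (K : ∀ i, Fin (c i) → Matrix (Fin (d (i+1))) (Fin (d i)) ℂ) (k : ℕ)
    {ξ : Matrix (Fin m × Fin (d 0)) (Fin m × Fin (d 0)) ℂ} (hξ : ξ.PosSemidef) :
    (iterExt m d c K k ξ).PosSemidef := by
  induction k with
  | zero => exact hξ
  | succ k ih => exact krausApply_psd _ ih

lemma iterExt_trace (m : ℕ) (d c : ℕ → ℕ)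
    (K : ∀ i, Fin (c i) → Matrix (Fin (d (i+1))) (Fin (d i)) ℂ)
    (hK : ∀ i, ∑ j, (K i j)ᴴ * K i j = 1) (k : ℕ)
    (ξ : Matrix (Fin m × Fin (d 0)) (Fin m × Fin (d 0)) ℂ) :
    (iterExt m d c K k ξ).trace = ξ.trace := by
  induction k with
  | zero => rfl
  | succ k ih =>
    show (krausApply _ (iterExt m d c K k ξ)).trace = ξ.trace
    rw [krausApply_trace (kron_kraus_cond (hK k)), ih]

lemma ptraceL_iterExt (m : ℕ) (d c : ℕ → ℕ)
    (K : ∀ i, Fin (c i) → Matrix (Fin (d (i+1))) (Fin (d i)) ℂ) (k : ℕ)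
    (ξ : Matrix (Fin m × Fin (d 0)) (Fin m × Fin (d 0)) ℂ) :
    ptraceL (iterExt m d c K k ξ) = iterApp d c K k (ptraceL ξ) := by
  induction k with
  | zero => rfl
  | succ k ih =>
    show ptraceL (krausApply _ (iterExt m d c K k ξ)) = krausApply _ (iterApp d c K k (ptraceL ξ))
    rw [ptraceL_kraus, ih]

end AuxCh

theorem cdist_chaining (d cM cN : ℕ → ℕ)
    (M : ∀ i, Fin (cM i) → Matrix (Fin (d (i+1))) (Fin (d i)) ℂ)
    (N : ∀ i, Fin (cN i) → Matrix (Fin (d (i+1))) (Fin (d i)) ℂ)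
    (hM : ∀ i, ∑ j, (M i j)ᴴ * M i j = 1) (hN : ∀ i, ∑ j, (N i j)ᴴ * N i j = 1)
    (Ω : Matrix (Fin (d 0)) (Fin (d 0)) ℂ) (hΩ : Ω.PosSemidef) (hΩ1 : Ω.trace = 1)
    (k : ℕ) :
    sSup {r | ∃ (m : ℕ) (ξ : Matrix (Fin m × Fin (d 0)) (Fin m × Fin (d 0)) ℂ),
        ξ.PosSemidef ∧ ξ.trace = 1 ∧ ptraceL ξ = Ω ∧
        r = traceNorm (iterExt m d cM M k ξ - iterExt m d cN N k ξ)}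
      ≤ ∑ i ∈ Finset.range k, cdist (M i) (N i) (iterApp d cM M i Ω) := by
  apply Real.sSup_le
  · rintro r ⟨m, ξ, hξ, hξ1, hξΩ, rfl⟩
    induction k with
    | zero =>
      simp only [iterExt, sub_self, Finset.range_zero, Finset.sum_empty]
      rw [AuxCh.traceNorm_zero]
    | succ k ih =>
      set A := iterExt m d cM M k ξ with hA
      set B := iterExt m d cN N k ξ with hB
      have hApsd : A.PosSemidef := AuxCh.iterExt_psd m d cM M k hξ
      have hBpsd : B.PosSemidef := AuxCh.iterExt_psd m d cN N k hξ
      have hAtr : A.trace = 1 := by rw [hA, AuxCh.iterExt_trace m d cM M hM k ξ, hξ1]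
      have hApt : ptraceL A = iterApp d cM M k Ω := by
        rw [hA, AuxCh.ptraceL_iterExt, hξΩ]
      have hsplit : iterExt m d cM M (k+1) ξ - iterExt m d cN N (k+1) ξ
          = (krausApply (fun j => (1 : Matrix (Fin m) (Fin m) ℂ) ⊗ₖ M k j) A
              - krausApply (fun j => (1 : Matrix (Fin m) (Fin m) ℂ) ⊗ₖ N k j) A)
            + krausApply (fun j => (1 : Matrix (Fin m) (Fin m) ℂ) ⊗ₖ N k j) (A - B) := by
        rw [AuxCh.krausApply_sub]
        show krausApply _ A - krausApply _ B = _
        abel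
      rw [hsplit]
      have hherm1 : (krausApply (fun j => (1 : Matrix (Fin m) (Fin m) ℂ) ⊗ₖ M k j) A
          - krausApply (fun j => (1 : Matrix (Fin m) (Fin m) ℂ) ⊗ₖ N k j) A).IsHermitian :=
        ((AuxCh.krausApply_psd _ hApsd).1).sub ((AuxCh.krausApply_psd _ hApsd).1)
      have hherm2 : (krausApply (fun j => (1 : Matrix (Fin m) (Fin m) ℂ) ⊗ₖ N k j)
          (A - B)).IsHermitian := by
        rw [AuxCh.krausApply_sub]
        exact ((AuxCh.krausApply_psd _ hApsd).1).sub ((AuxCh.krausApply_psd _ hBpsd).1)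
      refine le_trans (AuxCh.traceNorm_add_le hherm1 hherm2) ?_
      rw [Finset.sum_range_succ]
      have hb1 : traceNorm (krausApply (fun j => (1 : Matrix (Fin m) (Fin m) ℂ) ⊗ₖ M k j) A
            - krausApply (fun j => (1 : Matrix (Fin m) (Fin m) ℂ) ⊗ₖ N k j) A)
          ≤ cdist (M k) (N k) (iterApp d cM M k Ω) := by
        apply le_csSup
        · refine ⟨2, ?_⟩
          rintro r ⟨m', x, hx, hx1, hxw, rfl⟩
          have h := AuxCh.traceNorm_sub_le
            (AuxCh.krausApply_psd (fun j => (1 : Matrix (Fin m') (Fin m') ℂ) ⊗ₖ M k j) hx)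
            (AuxCh.krausApply_psd (fun j => (1 : Matrix (Fin m') (Fin m') ℂ) ⊗ₖ N k j) hx)
          rw [AuxCh.krausApply_trace (AuxCh.kron_kraus_cond (hM k)),
            AuxCh.krausApply_trace (AuxCh.kron_kraus_cond (hN k)), hx1] at h
          simp only [Complex.one_re] at h
          linarith
        · exact ⟨m, A, hApsd, hAtr, hApt, rfl⟩
      have hb2 : traceNorm (krausApply (fun j => (1 : Matrix (Fin m) (Fin m) ℂ) ⊗ₖ N k j) (A - B))
          ≤ traceNorm (A - B) :=
        AuxCh.traceNorm_kraus_le (AuxCh.kron_kraus_cond (hN k)) (hApsd.1.sub hBpsd.1)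
      have := ih
      linarith
  · apply Finset.sum_nonneg
    intro i _
    apply Real.sSup_nonneg
    rintro r ⟨m', x, hx, hx1, hxw, rfl⟩
    exact AuxCh.traceNorm_nonneg _
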